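/- In the policy self-modification model with modification-independent belief ρ and modification-independent initial utility function u_1, let π be a deterministic policy and let π̂ be its associated world policy. Then the realistic value of π equals the standard value of π̂: Q^re_1(ε, π(ε)) = Q^π̂(ε, π̂(ε)), where ε is the empty history. -/
import Mathlib


/-!
STATEMENT 8 (Everitt et al., Lemma "Value-equivalence with standard model",
second part).

Policy self-modification model: world actions `Ahat` (finite), percepts `Ept`
(finite), policy names `P` with naming map `ι : P → Policy`.  The belief `ρ`
and the initial utility function `u` are modification-independent (enforced by
their types).

`Qre ι ρ u γ ε (π ε)` is the `ρ^π_re`-expected value of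
`Σ_{k≥1} γ^{k-1} u(world history up to k)` (realistic value of `π` at the
empty history `ε = []`), formalised via the `n`-step expectations `EUre`.
For a world policy `pw`, `Qw ρ u γ pw ε (pw ε)` is the `ρ^pw`-expected value
of the same sum (standard value), formalised via `EUw`.

A world policy `pw` is an *associated world policy* of the deterministic
policy `π` if for every history `h` of positive `ρ^π_re`-probability
(`probRe ι ρ π [] h > 0`), `pw` applied to the world part of `h` equals the
world-action component of the action taken at `h` by the policy in force
after `h` (`polAt ι π h`); it is arbitrary elsewhere.

Claim: the realistic value of `π` equals the standard value of `pw`: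
`Q^re_1(ε, π(ε)) = Q^pw(ε, pw(ε))`.
-/

noncomputable section

namespace Stmt8

/-- Actions: a world action together with the name of the policy selected for
the next step. -/
abbrev Act (Ahat P : Type*) : Type _ := Ahat × P

/-- Histories: finite sequences of action–percept pairs. -/
abbrev Hist (Ahat P Ept : Type*) : Type _ := List (Act Ahat P × Ept)

/-- Policies: maps from histories to actions. -/
abbrev Policy (Ahat P Ept : Type*) : Type _ := Hist Ahat P Ept → Act Ahat P

/-- The world part of a history (policy-name components deleted). -/
def hworld {Ahat P Ept : Type*} (h : Hist Ahat P Ept) : List (Ahat × Ept) :=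
  h.map fun pe => (pe.1.1, pe.2)

/-- A function on histories is modification-independent if its value depends
only on the world part of its argument. -/
def ModIndep {Ahat P Ept α : Type*} (f : Hist Ahat P Ept → α) : Prop :=
  ∀ h h' : Hist Ahat P Ept, hworld h = hworld h' → f h = f h'


/-- The policy in force immediately after history `h`: the initial policy `π`
if `h` is empty, otherwise the policy named by the last action of `h`. -/
def polAt {Ahat P Ept : Type*} (ι : P → Policy Ahat P Ept)
    (π : Policy Ahat P Ept) (h : Hist Ahat P Ept) : Policy Ahat P Ept :=
  match h.getLast? with
  | none => π
  | some ae => ι ae.1.2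

open Classical in
/-- `probRe ι ρ π pre h` is the probability, under the realistic measure
started from the history `pre` with current policy `π`, that the next
`h.length` action–percept pairs are exactly `h` (actions are taken
deterministically by the evolving policies, percepts are sampled from `ρ`).
In particular `probRe ι ρ π [] h` is the `ρ^π_re`-probability of the history
`h`. -/
noncomputable def probRe {Ahat P Ept : Type*} (ι : P → Policy Ahat P Ept)
    (ρ : List (Ahat × Ept) → Ahat → Ept → ℝ) :
    Policy Ahat P Ept → Hist Ahat P Ept → Hist Ahat P Ept → ℝ
  | _, _, [] => 1
  | π, pre, ae :: rest =>
      (if π pre = ae.1 then ρ (hworld pre) ae.1.1 ae.2 else 0) *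
        probRe ι ρ (ι ae.1.2) (pre ++ [ae]) rest

open Classical in
/-- `probW ρ pw pre wh` is the probability, under the measure `ρ^pw` induced
by the world policy `pw` and the belief `ρ`, that the `wh.length` world
action–percept pairs following the world history `pre` are exactly `wh`.
In particular `probW ρ pw [] wh` is `ρ^pw(wh)`. -/
noncomputable def probW {Ahat Ept : Type*}
    (ρ : List (Ahat × Ept) → Ahat → Ept → ℝ)
    (pw : List (Ahat × Ept) → Ahat) :
    List (Ahat × Ept) → List (Ahat × Ept) → ℝ
  | _, [] => 1
  | pre, ae :: rest =>
      (if pw pre = ae.1 then ρ pre ae.1 ae.2 else 0) *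
        probW ρ pw (pre ++ [ae]) rest

/-- `EUre ι ρ u h a n`: expected `u`-utility received `n` steps after taking
action `a` following history `h`, with percepts sampled from `ρ` and every
future action taken by the policy selected by the preceding action (the
realistic measure `ρ_re`). -/
def EUre {Ahat P Ept : Type*} [Fintype Ept] (ι : P → Policy Ahat P Ept)
    (ρ : List (Ahat × Ept) → Ahat → Ept → ℝ) (u : List (Ahat × Ept) → ℝ) :
    Hist Ahat P Ept → Act Ahat P → ℕ → ℝ
  | h, a, 0 => ∑ e, ρ (hworld h) a.1 e * u (hworld h ++ [(a.1, e)])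
  | h, a, n + 1 =>
      ∑ e, ρ (hworld h) a.1 e *
        EUre ι ρ u (h ++ [(a, e)]) (ι a.2 (h ++ [(a, e)])) n

/-- The realistic `Q`-value: expected discounted `u`-utility when all future
actions are chosen by the policies selected through self-modification. -/
def Qre {Ahat P Ept : Type*} [Fintype Ept] (ι : P → Policy Ahat P Ept)
    (ρ : List (Ahat × Ept) → Ahat → Ept → ℝ) (u : List (Ahat × Ept) → ℝ)
    (γ : ℝ) (h : Hist Ahat P Ept) (a : Act Ahat P) : ℝ :=
  ∑' n : ℕ, γ ^ n * EUre ι ρ u h a n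

/-- The realistic `V`-value of a policy `π` (a policy argument beyond the next
action is superfluous, since the action determines the next policy). -/
def Vre {Ahat P Ept : Type*} [Fintype Ept] (ι : P → Policy Ahat P Ept)
    (ρ : List (Ahat × Ept) → Ahat → Ept → ℝ) (u : List (Ahat × Ept) → ℝ)
    (γ : ℝ) (π : Policy Ahat P Ept) (h : Hist Ahat P Ept) : ℝ :=
  Qre ι ρ u γ h (π h)

/-- `EUw ρ u pw wh aw n`: in the standard (non-modifying) model, the expected
`u`-utility received `n` steps after taking world action `aw` following world
history `wh`, with percepts sampled from `ρ` and future actions taken by the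
world policy `pw`. -/
def EUw {Ahat Ept : Type*} [Fintype Ept]
    (ρ : List (Ahat × Ept) → Ahat → Ept → ℝ) (u : List (Ahat × Ept) → ℝ)
    (pw : List (Ahat × Ept) → Ahat) :
    List (Ahat × Ept) → Ahat → ℕ → ℝ
  | wh, aw, 0 => ∑ e, ρ wh aw e * u (wh ++ [(aw, e)])
  | wh, aw, n + 1 =>
      ∑ e, ρ wh aw e *
        EUw ρ u pw (wh ++ [(aw, e)]) (pw (wh ++ [(aw, e)])) n

/-- The standard `Q`-value of a world policy `pw`. -/
def Qw {Ahat Ept : Type*} [Fintype Ept]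
    (ρ : List (Ahat × Ept) → Ahat → Ept → ℝ) (u : List (Ahat × Ept) → ℝ)
    (γ : ℝ) (pw : List (Ahat × Ept) → Ahat)
    (wh : List (Ahat × Ept)) (aw : Ahat) : ℝ :=
  ∑' n : ℕ, γ ^ n * EUw ρ u pw wh aw n

section Aux

variable {Ahat P Ept : Type*} [Fintype Ept]

lemma polAt_cons (ι : P → Policy Ahat P Ept) (π : Policy Ahat P Ept)
    (ae : Act Ahat P × Ept) (rest : Hist Ahat P Ept) :
    polAt ι π (ae :: rest) = polAt ι (ι ae.1.2) rest := by
  cases rest with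
  | nil => simp [polAt]
  | cons b t =>
      rcases hx : (b :: t).getLast? with _ | x
      · simp at hx
      · simp [polAt, List.getLast?_cons_cons, hx]

lemma polAt_concat (ι : P → Policy Ahat P Ept) (π : Policy Ahat P Ept)
    (h : Hist Ahat P Ept) (ae : Act Ahat P × Ept) :
    polAt ι π (h ++ [ae]) = ι ae.1.2 := by
  simp [polAt, List.getLast?_concat]

lemma probRe_append (ι : P → Policy Ahat P Ept)
    (ρ : List (Ahat × Ept) → Ahat → Ept → ℝ) :
    ∀ (h1 : Hist Ahat P Ept) (σ : Policy Ahat P Ept) (pre h2 : Hist Ahat P Ept),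
      probRe ι ρ σ pre (h1 ++ h2) =
        probRe ι ρ σ pre h1 * probRe ι ρ (polAt ι σ h1) (pre ++ h1) h2 := by
  intro h1
  induction h1 with
  | nil => intro σ pre h2; simp [probRe, polAt]
  | cons ae rest ih =>
      intro σ pre h2
      simp only [List.cons_append, probRe, polAt_cons, mul_assoc, List.append_eq]
      rw [ih (ι ae.1.2) (pre ++ [ae]) h2]
      congr 2
      simp

lemma hworld_append {Ahat P Ept : Type*} (h h' : Hist Ahat P Ept) :
    hworld (h ++ h') = hworld h ++ hworld h' := by
  simp [hworld]

lemma EUre_eq_EUw (ι : P → Policy Ahat P Ept)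
    (ρ : List (Ahat × Ept) → Ahat → Ept → ℝ)
    (hρpos : ∀ wh (aw : Ahat) (e : Ept), 0 < ρ wh aw e)
    (u : List (Ahat × Ept) → ℝ)
    (π : Policy Ahat P Ept)
    (pw : List (Ahat × Ept) → Ahat)
    (hassoc : ∀ h : Hist Ahat P Ept,
      0 < probRe ι ρ π [] h → pw (hworld h) = ((polAt ι π h) h).1) :
    ∀ (n : ℕ) (h : Hist Ahat P Ept), 0 < probRe ι ρ π [] h →
      EUre ι ρ u h ((polAt ι π h) h) n
        = EUw ρ u pw (hworld h) (pw (hworld h)) n := by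
  intro n
  induction n with
  | zero =>
      intro h hpos
      have ha := hassoc h hpos
      simp [EUre, EUw, ha]
  | succ n ih =>
      intro h hpos
      have ha := hassoc h hpos
      simp only [EUre, EUw]
      refine Finset.sum_congr rfl fun e _ => ?_
      set a := (polAt ι π h) h with hadef
      have h1 : hworld (h ++ [(a, e)]) = hworld h ++ [(a.1, e)] := by
        simp [hworld_append, hworld]
      have hpos' : 0 < probRe ι ρ π [] (h ++ [(a, e)]) := by
        rw [probRe_append ι ρ h π [] [(a, e)]]
        simp only [List.nil_append, probRe, ← hadef, if_pos rfl, mul_one]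
        exact mul_pos hpos (hρpos (hworld h) a.1 e)
      have key := ih (h ++ [(a, e)]) hpos'
      rw [polAt_concat ι π h (a, e)] at key
      rw [h1] at key
      rw [key, ha]
  end Aux

/-- **Value-equivalence with the standard model.** -/
theorem realistic_value_eq_world_value
    {Ahat P Ept : Type*} [Fintype Ahat] [Nonempty Ahat] [Fintype Ept] [Nonempty Ept]
    (ι : P → Policy Ahat P Ept)
    (ρ : List (Ahat × Ept) → Ahat → Ept → ℝ)
    (hρpos : ∀ wh (aw : Ahat) (e : Ept), 0 < ρ wh aw e)
    (hρsum : ∀ wh (aw : Ahat), ∑ e, ρ wh aw e = 1)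
    (u : List (Ahat × Ept) → ℝ)
    (hu : ∀ wh, u wh ∈ Set.Icc (0 : ℝ) 1)
    (γ : ℝ) (hγ0 : 0 < γ) (hγ1 : γ < 1)
    (π : Policy Ahat P Ept)
    (pw : List (Ahat × Ept) → Ahat)
    (hassoc : ∀ h : Hist Ahat P Ept,
      0 < probRe ι ρ π [] h → pw (hworld h) = ((polAt ι π h) h).1) :
    Qre ι ρ u γ [] (π []) = Qw ρ u γ pw [] (pw []) := by
  unfold Qre Qw
  refine tsum_congr fun n => ?_
  congr 1
  have h0 : (0 : ℝ) < probRe ι ρ π [] [] := by norm_num [probRe]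
  have := EUre_eq_EUw ι ρ hρpos u π pw hassoc n [] h0
  have hpol : polAt ι π ([] : Hist Ahat P Ept) = π := rfl
  rw [hpol] at this
  simpa [hworld] using this

end Stmt8
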